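/- For any bipartition (ρ;σ) of n, there exists a unique special bipartition (ρ;σ)° ∈ Q_n° such that (ρ;σ) ≤ (ρ;σ)° and (ρ;σ)° ≤ (τ;υ) for every special bipartition (τ;υ) with (ρ;σ) ≤ (τ;υ). Moreover (ρ;σ)° can be constructed explicitly: whenever ρ_i < σ_i − 1, replace ρ_i, σ_i by ⌊(ρ_i+σ_i)/2⌋, ⌈(ρ_i+σ_i)/2⌉; whenever σ_i < ρ_{i+1}, replace σ_i, ρ_{i+1} by ⌈(σ_i+ρ_{i+1})/2⌉, ⌊(σ_i+ρ_{i+1})/2⌋. -/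
import Mathlib


open Finset

/-- Partial sum of the first `k` terms of a sequence of naturals. -/
def psum (π : ℕ → ℕ) (k : ℕ) : ℕ := ∑ i ∈ Finset.range k, π i

/-- A composition of `n`: almost all terms zero, summing to `n`. -/
def IsComposition (n : ℕ) (π : ℕ → ℕ) : Prop :=
  ∃ N, (∀ i, N ≤ i → π i = 0) ∧ psum π N = n

/-- Dominance order: `l` dominates `π`. -/
def Dominates (l π : ℕ → ℕ) : Prop := ∀ k, psum π k ≤ psum l k

/-- A partition: weakly decreasing sequence. -/
def IsPartition (π : ℕ → ℕ) : Prop := ∀ i, π (i + 1) ≤ π i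

/-- A quasi-partition: `π i ≥ π (i+2)` for all `i`. -/
def IsQuasiPartition (π : ℕ → ℕ) : Prop := ∀ i, π (i + 2) ≤ π i

/-- Interleaving of two sequences: `(ρ₁, σ₁, ρ₂, σ₂, …)` (0-indexed). -/
def interleave (ρ σ : ℕ → ℕ) (i : ℕ) : ℕ :=
  if i % 2 = 0 then ρ (i / 2) else σ (i / 2)

/-- A bipartition of `n`: a pair of partitions whose interleaving sums to `n`. -/
def IsBipartition (n : ℕ) (ρ σ : ℕ → ℕ) : Prop :=
  IsPartition ρ ∧ IsPartition σ ∧ IsComposition n (interleave ρ σ)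

/-- Interleaved dominance order on bipartitions: `(ρ;σ) ≤ (μ;ν)`. -/
def BiLE (ρ σ μ ν : ℕ → ℕ) : Prop :=
  Dominates (interleave μ ν) (interleave ρ σ)

/-- The map `Φ^C` on sequences: replace a consecutive pair `2s < 2t`
by `s+t, s+t` (pointwise description; replacements never overlap for
quasi-partitions). -/
def phiC (π : ℕ → ℕ) : ℕ → ℕ
  | 0 => if π 0 < π 1 then (π 0 + π 1) / 2 else π 0
  | (j + 1) =>
      if π (j + 1) < π (j + 2) then (π (j + 1) + π (j + 2)) / 2
      else if π j < π (j + 1) then (π j + π (j + 1)) / 2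
      else π (j + 1)

/-- `Φ^C` of a bipartition: apply `phiC` to the doubled interleaving. -/
def PhiC (ρ σ : ℕ → ℕ) : ℕ → ℕ := phiC (fun i => 2 * interleave ρ σ i)

/-- Membership in `P^C_{2n}`: partition of `2n` with every odd part of even
multiplicity. -/
def IsPC (n : ℕ) (l : ℕ → ℕ) : Prop :=
  IsPartition l ∧ IsComposition (2 * n) l ∧
    ∀ a : ℕ, Odd a → Even ({i | l i = a}.ncard)

/-- C-distinguished: `μ i ≥ ν i - 1` and `ν i ≥ μ (i+1) - 1`. -/
def QC (μ ν : ℕ → ℕ) : Prop :=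
  ∀ i, ν i ≤ μ i + 1 ∧ μ (i + 1) ≤ ν i + 1

/-- B-distinguished: `μ i ≥ ν i - 2` and `ν i ≥ μ (i+1)`. -/
def QB (μ ν : ℕ → ℕ) : Prop :=
  ∀ i, ν i ≤ μ i + 2 ∧ μ (i + 1) ≤ ν i

/-- Special: `μ i ≥ ν i - 1` and `ν i ≥ μ (i+1)`. -/
def QS (μ ν : ℕ → ℕ) : Prop :=
  ∀ i, ν i ≤ μ i + 1 ∧ μ (i + 1) ≤ ν i

/-- The condition defining `Q_n^{B,2}`: `μ i ≥ ν i - 2`. -/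
def QB2 (μ ν : ℕ → ℕ) : Prop := ∀ i, ν i ≤ μ i + 2

/-- For an antitone sequence, the starting index of the run of equal values
containing index `i`. -/
noncomputable def runStart (l : ℕ → ℕ) (i : ℕ) : ℕ := {j | l i < l j}.ncard

/-- The map `Φ̂^C`, pointwise: halve even parts; replace an (even-length)
maximal run of an odd part `2k+1` with `k, k+1, k, k+1, …`. -/
noncomputable def hphiC (l : ℕ → ℕ) (i : ℕ) : ℕ :=
  if Even (l i) then l i / 2
  else if Even (i - runStart l i) then l i / 2 else l i / 2 + 1

/-- Partial sums of an integer sequence. -/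
def zsum (π : ℕ → ℤ) (k : ℕ) : ℤ := ∑ i ∈ Finset.range k, π i

/-- Dominance order on integer sequences. -/
def ZDominates (l π : ℕ → ℤ) : Prop := ∀ k, zsum π k ≤ zsum l k

/-- The interleaved integer sequence `(2ρ₁+1, 2σ₁−1, 2ρ₂+1, 2σ₂−1, …)`. -/
def interB (ρ σ : ℕ → ℕ) (i : ℕ) : ℤ :=
  if i % 2 = 0 then 2 * (ρ (i / 2) : ℤ) + 1 else 2 * (σ (i / 2) : ℤ) - 1

/-- The map `Φ^B` on integer sequences: replace a consecutive pair `s < t`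
by `(s+t)/2, (s+t)/2` (pointwise description). -/
def phiB (π : ℕ → ℤ) : ℕ → ℤ
  | 0 => if π 0 < π 1 then (π 0 + π 1) / 2 else π 0
  | (j + 1) =>
      if π (j + 1) < π (j + 2) then (π (j + 1) + π (j + 2)) / 2
      else if π j < π (j + 1) then (π j + π (j + 1)) / 2
      else π (j + 1)

/-- `Φ^B` of a bipartition. -/
def PhiB (ρ σ : ℕ → ℕ) : ℕ → ℤ := phiB (interB ρ σ)

/-- Membership in `P^B_{2n+1}` for an integer sequence: nonnegative, weakly
decreasing, summing to `2n+1`, with every (positive) even part of even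
multiplicity. -/
def IsPB (n : ℕ) (l : ℕ → ℤ) : Prop :=
  (∀ i, 0 ≤ l i) ∧ (∀ i, l (i + 1) ≤ l i) ∧
  (∃ N, (∀ i, N ≤ i → l i = 0) ∧ zsum l N = 2 * n + 1) ∧
  ∀ a : ℤ, 0 < a → Even a → Even ({i | l i = a}.ncard)

/-- Membership in `P^B_{2n+1}` for a natural-number partition. -/
def IsPBN (n : ℕ) (l : ℕ → ℕ) : Prop :=
  IsPartition l ∧ IsComposition (2 * n + 1) l ∧
    ∀ a : ℕ, 0 < a → Even a → Even ({i | l i = a}.ncard)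

/-- The map `Φ̂^B`, pointwise (0-indexed, so the paper's index `i` is `j+1`):
an odd part `λ_i` becomes `(λ_i + (−1)^i)/2`; a maximal run of an even part
`2k` starting at (0-indexed) position `s` becomes `k, k, …` if `s` is odd
(paper's `i` even) and `k−1, k+1, k−1, k+1, …` if `s` is even (paper's `i`
odd). -/
noncomputable def hphiB (l : ℕ → ℕ) (j : ℕ) : ℕ :=
  if Odd (l j) then (if Even j then (l j - 1) / 2 else (l j + 1) / 2)
  else
    if Odd (runStart l j) then l j / 2
    else if Even (j - runStart l j) then l j / 2 - 1 else l j / 2 + 1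

/-- First component of the special closure `(ρ;σ)°`. -/
def scRho (ρ σ : ℕ → ℕ) : ℕ → ℕ
  | 0 => if ρ 0 + 1 < σ 0 then (ρ 0 + σ 0) / 2 else ρ 0
  | (i + 1) =>
      if ρ (i + 1) + 1 < σ (i + 1) then (ρ (i + 1) + σ (i + 1)) / 2
      else if σ i < ρ (i + 1) then (σ i + ρ (i + 1)) / 2
      else ρ (i + 1)

/-- Second component of the special closure `(ρ;σ)°`. -/
def scSigma (ρ σ : ℕ → ℕ) (i : ℕ) : ℕ :=
  if ρ i + 1 < σ i then (ρ i + σ i + 1) / 2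
  else if σ i < ρ (i + 1) then (σ i + ρ (i + 1) + 1) / 2
  else σ i

/-- First component of the closure `(ρ;σ)~` into `Q_n^{B,2}`. -/
def tRho (ρ σ : ℕ → ℕ) (i : ℕ) : ℕ :=
  if ρ i + 2 < σ i then (ρ i + σ i + 1) / 2 - 1 else ρ i

/-- Second component of the closure `(ρ;σ)~` into `Q_n^{B,2}`. -/
def tSigma (ρ σ : ℕ → ℕ) (i : ℕ) : ℕ :=
  if ρ i + 2 < σ i then (ρ i + σ i) / 2 + 1 else σ i

/-- First component of the closure `(ρ;σ)^B` into `Q_n^B`. -/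
def bRho (ρ σ : ℕ → ℕ) : ℕ → ℕ
  | 0 => if ρ 0 + 2 < σ 0 then (ρ 0 + σ 0 + 1) / 2 - 1 else ρ 0
  | (i + 1) =>
      if ρ (i + 1) + 2 < σ (i + 1) then (ρ (i + 1) + σ (i + 1) + 1) / 2 - 1
      else if σ i < ρ (i + 1) then (σ i + ρ (i + 1)) / 2
      else ρ (i + 1)

/-- Second component of the closure `(ρ;σ)^B` into `Q_n^B`. -/
def bSigma (ρ σ : ℕ → ℕ) (i : ℕ) : ℕ :=
  if ρ i + 2 < σ i then (ρ i + σ i) / 2 + 1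
  else if σ i < ρ (i + 1) then (σ i + ρ (i + 1) + 1) / 2
  else σ i

/-- First component of the closure `(ρ;σ)^C` into `Q_n^C`. -/
def cRho (ρ σ : ℕ → ℕ) : ℕ → ℕ
  | 0 => if ρ 0 + 1 < σ 0 then (ρ 0 + σ 0) / 2 else ρ 0
  | (i + 1) =>
      if ρ (i + 1) + 1 < σ (i + 1) then (ρ (i + 1) + σ (i + 1)) / 2
      else if σ i + 1 < ρ (i + 1) then (σ i + ρ (i + 1) + 1) / 2
      else ρ (i + 1)

/-- Second component of the closure `(ρ;σ)^C` into `Q_n^C`. -/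
def cSigma (ρ σ : ℕ → ℕ) (i : ℕ) : ℕ :=
  if ρ i + 1 < σ i then (ρ i + σ i + 1) / 2
  else if σ i + 1 < ρ (i + 1) then (σ i + ρ (i + 1)) / 2
  else σ i

/-! ### Auxiliary development for `special_closure` -/

/-- The closure operation on the interleaved sequence. -/
def scClose (π : ℕ → ℕ) : ℕ → ℕ
  | 0 => if π 0 + 1 < π 1 then (π 0 + π 1) / 2 else π 0
  | (p+1) =>
      if π (p+1) + (p+2) % 2 < π (p+2) then (π (p+1) + π (p+2) + (p+1) % 2) / 2
      else if π p + (p+1) % 2 < π (p+1) then (π p + π (p+1) + (p+1) % 2) / 2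
      else π (p+1)

lemma scClose_zero (π : ℕ → ℕ) :
    scClose π 0 = if π 0 + 1 < π 1 then (π 0 + π 1) / 2 else π 0 := rfl

lemma scClose_succ (π : ℕ → ℕ) (p : ℕ) :
    scClose π (p+1) =
      if π (p+1) + (p+2) % 2 < π (p+2) then (π (p+1) + π (p+2) + (p+1) % 2) / 2
      else if π p + (p+1) % 2 < π (p+1) then (π p + π (p+1) + (p+1) % 2) / 2
      else π (p+1) := rfl

/-- The excess of the partial sums of `scClose π` over those of `π`. -/
def scExcess (π : ℕ → ℕ) : ℕ → ℕ
  | 0 => 0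
  | (p+1) => if π p + (p+1) % 2 < π (p+1) then (π p + π (p+1) + p % 2) / 2 - π p else 0

lemma scExcess_zero (π : ℕ → ℕ) : scExcess π 0 = 0 := rfl

lemma scExcess_succ (π : ℕ → ℕ) (p : ℕ) :
    scExcess π (p+1) =
      if π p + (p+1) % 2 < π (p+1) then (π p + π (p+1) + p % 2) / 2 - π p else 0 := rfl

lemma psum_succ (f : ℕ → ℕ) (k : ℕ) : psum f (k+1) = psum f k + f k :=
  Finset.sum_range_succ f k

lemma psum_congr {f g : ℕ → ℕ} (h : ∀ i, f i = g i) (k : ℕ) : psum f k = psum g k :=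
  Finset.sum_congr rfl (fun i _ => h i)

lemma interleave_even (ρ σ : ℕ → ℕ) (i : ℕ) : interleave ρ σ (2*i) = ρ i := by
  unfold interleave
  rw [if_pos (Nat.mul_mod_right 2 i)]
  congr 1
  omega

lemma interleave_odd (ρ σ : ℕ → ℕ) (i : ℕ) : interleave ρ σ (2*i+1) = σ i := by
  unfold interleave
  rw [if_neg (by omega : ¬ (2*i+1) % 2 = 0)]
  congr 1
  omega

lemma interleave_quasi {ρ σ : ℕ → ℕ} (hρ : IsPartition ρ) (hσ : IsPartition σ) (j : ℕ) :
    interleave ρ σ (j+2) ≤ interleave ρ σ j := by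
  unfold interleave
  have h2 : (j+2) % 2 = j % 2 := by omega
  have h3 : (j+2) / 2 = j / 2 + 1 := by omega
  rw [h2, h3]
  split
  · exact hρ _
  · exact hσ _

section closeLemmas

variable {π : ℕ → ℕ}

lemma scClose_special (hq : ∀ j, π (j+2) ≤ π j) (j : ℕ) : scClose π (j+1) ≤ scClose π j + (j+1) % 2 := by
  cases j with
  | zero =>
      rw [scClose_succ, scClose_zero]
      have h0 : π (0+2) ≤ π 0 := hq 0
      norm_num at h0 ⊢
      split_ifs <;> omega
  | succ p =>
      rw [scClose_succ π (p+1), scClose_succ π p]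
      have h0 : π (p+2) ≤ π p := hq p
      have h1 : π (p+1+2) ≤ π (p+1) := hq (p+1)
      simp only [Nat.add_assoc] at h1 ⊢
      norm_num at h1 ⊢
      split_ifs <;> omega

lemma scClose_quasi (hq : ∀ j, π (j+2) ≤ π j) (j : ℕ) : scClose π (j+2) ≤ scClose π j := by
  cases j with
  | zero =>
      rw [show (0:ℕ)+2 = 1+1 from rfl, scClose_succ, scClose_zero]
      have h0 : π (0+2) ≤ π 0 := hq 0
      have h1 : π (1+2) ≤ π 1 := hq 1
      norm_num at h0 h1 ⊢
      split_ifs <;> omega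
  | succ p =>
      rw [show p+1+2 = (p+2)+1 from rfl, scClose_succ π (p+2), scClose_succ π p]
      have h0 : π (p+2) ≤ π p := hq p
      have h1 : π (p+1+2) ≤ π (p+1) := hq (p+1)
      have h2 : π (p+2+2) ≤ π (p+2) := hq (p+2)
      simp only [Nat.add_assoc] at h1 h2 ⊢
      norm_num at h1 h2 ⊢
      split_ifs <;> omega

lemma psum_scClose (hq : ∀ j, π (j+2) ≤ π j) (k : ℕ) : psum (scClose π) k = psum π k + scExcess π k := by
  induction k with
  | zero => simp [psum, scExcess_zero]
  | succ k ih =>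
      rw [psum_succ, psum_succ, ih]
      have key : scExcess π k + scClose π k = π k + scExcess π (k+1) := by
        cases k with
        | zero =>
            rw [scExcess_zero, scClose_zero, scExcess_succ]
            norm_num
            split_ifs <;> omega
        | succ p =>
            rw [scExcess_succ π p, scClose_succ π p, scExcess_succ π (p+1)]
            have h0 : π (p+2) ≤ π p := hq p
            simp only [Nat.add_assoc] at h0 ⊢
            norm_num at h0 ⊢
            split_ifs <;> omega
      omega

lemma scClose_min (hq : ∀ j, π (j+2) ≤ π j) (θ : ℕ → ℕ) (hs : ∀ j, θ (j+1) ≤ θ j + (j+1) % 2)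
    (hdom : ∀ k, psum π k ≤ psum θ k) (k : ℕ) :
    psum (scClose π) k ≤ psum θ k := by
  rw [psum_scClose hq]
  cases k with
  | zero => simpa [scExcess_zero] using hdom 0
  | succ p =>
      rw [scExcess_succ]
      split_ifs with hD
      · have h1 := hdom p
        have e2 : psum π (p+1) = psum π p + π p := psum_succ π p
        have e3 : psum π (p+1+1) = psum π (p+1) + π (p+1) := psum_succ π (p+1)
        have e4 : psum θ (p+1) = psum θ p + θ p := psum_succ θ p
        have e5 : psum θ (p+1+1) = psum θ (p+1) + θ (p+1) := psum_succ θ (p+1)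
        have h2 : psum π (p+1+1) ≤ psum θ (p+1+1) := hdom (p+1+1)
        have h3 := hs p
        omega
      · simpa using hdom (p+1)

end closeLemmas

section interSC

variable {ρ σ : ℕ → ℕ}

lemma inter_sc (hρ : IsPartition ρ) (hσ : IsPartition σ) (j : ℕ) :
    interleave (scRho ρ σ) (scSigma ρ σ) j = scClose (interleave ρ σ) j := by
  obtain ⟨i, rfl | rfl⟩ : ∃ i, j = 2*i ∨ j = 2*i+1 := ⟨j/2, by omega⟩
  · rw [interleave_even]
    cases i with
    | zero =>
        rw [show 2*0 = 0 from rfl, scClose_zero]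
        have e0 : interleave ρ σ 0 = ρ 0 := by simpa using interleave_even ρ σ 0
        have e1 : interleave ρ σ 1 = σ 0 := by simpa using interleave_odd ρ σ 0
        rw [e0, e1]
        rfl
    | succ i =>
        rw [show 2*(i+1) = (2*i+1)+1 by ring, scClose_succ]
        have e1 : interleave ρ σ (2*i+1) = σ i := interleave_odd ρ σ i
        have e2 : interleave ρ σ (2*i+1+1) = ρ (i+1) := by
          rw [show 2*i+1+1 = 2*(i+1) by ring]; exact interleave_even ρ σ (i+1)
        have e3 : interleave ρ σ (2*i+1+2) = σ (i+1) := by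
          rw [show 2*i+1+2 = 2*(i+1)+1 by ring]; exact interleave_odd ρ σ (i+1)
        have m1 : (2*i+1+2) % 2 = 1 := by omega
        have m2 : (2*i+1+1) % 2 = 0 := by omega
        rw [e1, e2, e3, m1, m2]
        show scRho ρ σ (i+1) = _
        rw [show scRho ρ σ (i+1) =
          (if ρ (i+1) + 1 < σ (i+1) then (ρ (i+1) + σ (i+1)) / 2
           else if σ i < ρ (i+1) then (σ i + ρ (i+1)) / 2
           else ρ (i+1)) from rfl]
        split_ifs <;> omega
  · rw [interleave_odd]
    rw [scClose_succ]
    have e1 : interleave ρ σ (2*i) = ρ i := interleave_even ρ σ i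
    have e2 : interleave ρ σ (2*i+1) = σ i := interleave_odd ρ σ i
    have e3 : interleave ρ σ (2*i+2) = ρ (i+1) := by
      rw [show 2*i+2 = 2*(i+1) by ring]; exact interleave_even ρ σ (i+1)
    have m1 : (2*i+2) % 2 = 0 := by omega
    have m2 : (2*i+1) % 2 = 1 := by omega
    rw [e1, e2, e3, m1, m2]
    have hri := hρ i
    rw [show scSigma ρ σ i =
      (if ρ i + 1 < σ i then (ρ i + σ i + 1) / 2
       else if σ i < ρ (i+1) then (σ i + ρ (i+1) + 1) / 2
       else σ i) from rfl]
    split_ifs <;> omega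

end interSC

/-- existence, explicit construction, and uniqueness of the
special closure `(ρ;σ)°`: the minimum special bipartition dominating
`(ρ;σ)`. -/
theorem special_closure (n : ℕ) (ρ σ : ℕ → ℕ) (h : IsBipartition n ρ σ) :
    (IsBipartition n (scRho ρ σ) (scSigma ρ σ) ∧
     QS (scRho ρ σ) (scSigma ρ σ) ∧
     BiLE ρ σ (scRho ρ σ) (scSigma ρ σ) ∧
     (∀ τ υ : ℕ → ℕ, IsBipartition n τ υ → QS τ υ → BiLE ρ σ τ υ →
        BiLE (scRho ρ σ) (scSigma ρ σ) τ υ)) ∧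
    (∀ μ ν : ℕ → ℕ, IsBipartition n μ ν → QS μ ν → BiLE ρ σ μ ν →
      (∀ τ υ : ℕ → ℕ, IsBipartition n τ υ → QS τ υ → BiLE ρ σ τ υ →
        BiLE μ ν τ υ) →
      (∀ i, μ i = scRho ρ σ i) ∧ (∀ i, ν i = scSigma ρ σ i)) := by
  obtain ⟨hρ, hσ, hcomp⟩ := h
  set π : ℕ → ℕ := interleave ρ σ with hπ
  have hq : ∀ j, π (j+2) ≤ π j := interleave_quasi hρ hσ
  have hsc : ∀ j, interleave (scRho ρ σ) (scSigma ρ σ) j = scClose π j := inter_sc hρ hσ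
  have hvalR : ∀ i, scRho ρ σ i = scClose π (2*i) := fun i => by
    have := hsc (2*i); rwa [interleave_even] at this
  have hvalS : ∀ i, scSigma ρ σ i = scClose π (2*i+1) := fun i => by
    have := hsc (2*i+1); rwa [interleave_odd] at this
  have hpsum : ∀ k, psum (interleave (scRho ρ σ) (scSigma ρ σ)) k = psum (scClose π) k :=
    fun k => psum_congr hsc k
  have hPR : IsPartition (scRho ρ σ) := by
    intro i
    rw [hvalR i, hvalR (i+1), show 2*(i+1) = 2*i+2 by ring]
    exact scClose_quasi hq (2*i)
  have hPS : IsPartition (scSigma ρ σ) := by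
    intro i
    rw [hvalS i, hvalS (i+1), show 2*(i+1)+1 = (2*i+1)+2 by ring]
    exact scClose_quasi hq (2*i+1)
  obtain ⟨N, hN0, hNs⟩ := hcomp
  have hcomp' : IsComposition n (interleave (scRho ρ σ) (scSigma ρ σ)) := by
    refine ⟨N+1, ?_, ?_⟩
    · intro i hi
      rw [hsc i]
      obtain ⟨p, rfl⟩ : ∃ p, i = p+1 := ⟨i-1, by omega⟩
      rw [scClose_succ]
      have h1 : π (p+1) = 0 := hN0 (p+1) (by omega)
      have h2 : π (p+2) = 0 := hN0 (p+2) (by omega)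
      split_ifs <;> omega
    · rw [hpsum, psum_scClose hq]
      have hE : scExcess π (N+1) = 0 := by
        rw [scExcess_succ]
        have h1 : π (N+1) = 0 := hN0 (N+1) (by omega)
        split_ifs <;> omega
      have hps : psum π (N+1) = psum π N + π N := psum_succ π N
      have h0 : π N = 0 := hN0 N le_rfl
      omega
  have hQS : QS (scRho ρ σ) (scSigma ρ σ) := by
    intro i
    constructor
    · have := scClose_special hq (2*i)
      have m : (2*i+1) % 2 = 1 := by omega
      rw [m] at this
      rw [hvalS i, hvalR i]
      exact this
    · have := scClose_special hq (2*i+1)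
      have m : (2*i+1+1) % 2 = 0 := by omega
      rw [m] at this
      rw [hvalR (i+1), hvalS i, show 2*(i+1) = 2*i+1+1 by ring]
      omega
  have hle : BiLE ρ σ (scRho ρ σ) (scSigma ρ σ) := by
    intro k
    rw [hpsum, psum_scClose hq]
    exact Nat.le_add_right _ _
  have hmin : ∀ τ υ : ℕ → ℕ, IsBipartition n τ υ → QS τ υ → BiLE ρ σ τ υ →
      BiLE (scRho ρ σ) (scSigma ρ σ) τ υ := by
    intro τ υ hbi hqs hd k
    rw [hpsum]
    refine scClose_min hq (interleave τ υ) ?_ hd k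
    intro j
    obtain ⟨i, rfl | rfl⟩ : ∃ i, j = 2*i ∨ j = 2*i+1 := ⟨j/2, by omega⟩
    · rw [interleave_odd, interleave_even, show (2*i+1) % 2 = 1 by omega]
      have := (hqs i).1
      omega
    · rw [show 2*i+1+1 = 2*(i+1) by ring, interleave_even, interleave_odd,
        show (2*(i+1)) % 2 = 0 by omega]
      have := (hqs i).2
      omega
  have hbip : IsBipartition n (scRho ρ σ) (scSigma ρ σ) := ⟨hPR, hPS, hcomp'⟩
  refine ⟨⟨hbip, hQS, hle, hmin⟩, ?_⟩
  intro μ ν hbi' hqs' hle' hmin'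
  have hA : BiLE (scRho ρ σ) (scSigma ρ σ) μ ν := hmin μ ν hbi' hqs' hle'
  have hB : BiLE μ ν (scRho ρ σ) (scSigma ρ σ) := hmin' _ _ hbip hQS hle
  have heq : ∀ k, psum (interleave μ ν) k = psum (interleave (scRho ρ σ) (scSigma ρ σ)) k :=
    fun k => le_antisymm (hB k) (hA k)
  have hpt : ∀ j, interleave μ ν j = interleave (scRho ρ σ) (scSigma ρ σ) j := by
    intro j
    have h1 := heq j
    have h2 := heq (j+1)
    have e1 := psum_succ (interleave μ ν) j
    have e2 := psum_succ (interleave (scRho ρ σ) (scSigma ρ σ)) j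
    omega
  constructor
  · intro i
    have := hpt (2*i)
    rwa [interleave_even, interleave_even] at this
  · intro i
    have := hpt (2*i+1)
    rwa [interleave_odd, interleave_odd] at this
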